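/- There exists a compact set P ⊆ ℝ² with P - P ⊇ S¹ and Hausdorff dimension of P equal to 0. -/

import Mathlib

open Metric Set Filter Finset Real MeasureTheory
open scoped Pointwise Topology ENNReal NNReal

noncomputable section KD

/-- rapidly growing scales -/
def NN (k : ℕ) : ℕ := 2 ^ (k.factorial)

lemma NN_pos (k : ℕ) : 0 < NN k := Nat.pow_pos (by norm_num)

lemma NN_posR (k : ℕ) : (0:ℝ) < NN k := by exact_mod_cast NN_pos k

lemma NN_dvd {j i : ℕ} (h : j ≤ i) : NN j ∣ NN i :=
  pow_dvd_pow _ (Nat.factorial_le h)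

lemma NN_ge (k : ℕ) : 2 ^ k ≤ NN k :=
  Nat.pow_le_pow_right (by norm_num) (Nat.self_le_factorial k)

lemma factorial_add_le {K j : ℕ} (hK : 1 ≤ K) : K.factorial + j ≤ (K + j).factorial := by
  induction j with
  | zero => simp
  | succ j ih =>
      have h1 : (K + (j + 1)).factorial = (K + j + 1) * (K + j).factorial := by
        rw [show K + (j + 1) = (K + j) + 1 by ring]; rfl
      have h2 : 2 * (K + j).factorial ≤ (K + j + 1) * (K + j).factorial :=
        Nat.mul_le_mul_right _ (by omega)
      have h3 := (K + j).factorial_pos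
      omega

lemma NN_mul_le {K k : ℕ} (hK : 1 ≤ K) (h : K ≤ k) : NN K * 2 ^ (k - K) ≤ NN k := by
  have e : NN K * 2 ^ (k - K) = 2 ^ (K.factorial + (k - K)) := by rw [NN, pow_add]
  rw [e, NN]
  exact Nat.pow_le_pow_right (by norm_num) (by
    have := factorial_add_le (j := k - K) hK
    rwa [Nat.add_sub_cancel' h] at this)

/-- digit approximation at scale `k` -/
def aa (k : ℕ) (θ : ℝ) : ℝ := (⌊(NN k : ℝ) * θ⌋₊ : ℝ) / NN k

lemma aa_mem {θ : ℝ} (hθ : θ ∈ Ico (0:ℝ) 1) (k : ℕ) : aa k θ ∈ Ico (0:ℝ) 1 := by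
  constructor
  · exact div_nonneg (Nat.cast_nonneg _) (NN_posR k).le
  · rw [aa, div_lt_one (NN_posR k)]
    have h1 : (NN k : ℝ) * θ < NN k := by nlinarith [hθ.2, NN_posR k]
    calc (⌊(NN k : ℝ) * θ⌋₊ : ℝ) ≤ (NN k : ℝ) * θ :=
          Nat.floor_le (by nlinarith [hθ.1, NN_posR k])
      _ < NN k := h1

lemma aa_le {θ : ℝ} (hθ : 0 ≤ θ) (k : ℕ) : aa k θ ≤ θ := by
  rw [aa, div_le_iff₀ (NN_posR k), mul_comm]
  exact Nat.floor_le (by positivity)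

lemma lt_aa_add {θ : ℝ} (k : ℕ) : θ < aa k θ + 1 / NN k := by
  have h : (NN k : ℝ) * θ < ⌊(NN k : ℝ) * θ⌋₊ + 1 := Nat.lt_floor_add_one _
  rw [aa, ← add_div, lt_div_iff₀ (NN_posR k), mul_comm]
  linarith

lemma abs_sub_aa {θ : ℝ} (hθ : 0 ≤ θ) (k : ℕ) : |θ - aa k θ| ≤ 1 / NN k := by
  rw [abs_sub_le_iff]
  constructor
  · linarith [lt_aa_add (θ := θ) k]
  · linarith [aa_le hθ k, one_div_pos.2 (NN_posR k)]

lemma aa_aa_of_le {j i : ℕ} (h : j ≤ i) (θ : ℝ) : aa j (aa i θ) = aa j θ := by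
  obtain ⟨D, hD⟩ := NN_dvd h
  have hDpos : 0 < D := by
    rcases Nat.eq_zero_or_pos D with rfl | h0
    · rw [mul_zero] at hD; have := NN_pos i; omega
    · exact h0
  have hj := NN_posR j
  have hi := NN_posR i
  have hDR : (0:ℝ) < D := by exact_mod_cast hDpos
  have hcast : (NN i : ℝ) = (NN j : ℝ) * D := by exact_mod_cast hD
  set m : ℕ := ⌊(NN i : ℝ) * θ⌋₊ with hm
  have key1 : (NN j : ℝ) * aa i θ = (m : ℝ) / D := by
    rw [aa, ← hm, hcast]; field_simp
  have key2 : (NN j : ℝ) * θ = ((NN i : ℝ) * θ) / D := by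
    rw [hcast]; field_simp
  have e1 : ⌊(NN j : ℝ) * aa i θ⌋₊ = m / D := by
    rw [key1, Nat.floor_div_eq_div]
  have e2 : ⌊(NN j : ℝ) * θ⌋₊ = m / D := by
    rw [key2, Nat.floor_div_natCast, ← hm]
  show (⌊(NN j : ℝ) * aa i θ⌋₊ : ℝ) / NN j = aa j θ
  rw [e1, aa, e2]

lemma aa_aa_of_ge {i j : ℕ} (h : i ≤ j) (θ : ℝ) : aa j (aa i θ) = aa i θ := by
  obtain ⟨D, hD⟩ := NN_dvd h
  have hDpos : 0 < D := by
    rcases Nat.eq_zero_or_pos D with rfl | h0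
    · rw [mul_zero] at hD; have := NN_pos j; omega
    · exact h0
  have hj := NN_posR j
  have hi := NN_posR i
  have hDR : (0:ℝ) < D := by exact_mod_cast hDpos
  have hcast : (NN j : ℝ) = (NN i : ℝ) * D := by exact_mod_cast hD
  set m : ℕ := ⌊(NN i : ℝ) * θ⌋₊ with hm
  have key : (NN j : ℝ) * aa i θ = ((D * m : ℕ) : ℝ) := by
    rw [aa, ← hm, hcast]; push_cast; field_simp
  show (⌊(NN j : ℝ) * aa i θ⌋₊ : ℝ) / NN j = aa i θ
  rw [key, Nat.floor_natCast, aa, ← hm, hcast]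
  push_cast
  field_simp


def ff (θ : ℝ) : ℂ := Complex.exp ((θ : ℂ) * (2 * Real.pi * Complex.I))

lemma ff_norm (θ : ℝ) : ‖ff θ‖ = 1 := by
  rw [ff, Complex.norm_exp]
  have : ((θ : ℂ) * (2 * Real.pi * Complex.I)).re = 0 := by
    simp [Complex.mul_re]
  rw [this, Real.exp_zero]

lemma ff_hasDeriv (t : ℝ) : HasDerivAt ff (ff t * (2 * Real.pi * Complex.I)) t := by
  have h0 : HasDerivAt (fun t : ℝ => (t : ℂ)) 1 t := by
    simpa using (hasDerivAt_id t).ofReal_comp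
  have h1 : HasDerivAt (fun t : ℝ => (t : ℂ) * (2 * Real.pi * Complex.I))
      (2 * Real.pi * Complex.I) t := by
    simpa using h0.mul_const (2 * Real.pi * Complex.I)
  exact h1.cexp

lemma ff_lip : LipschitzWith 7 ff := by
  apply lipschitzWith_of_nnnorm_deriv_le (fun t => (ff_hasDeriv t).differentiableAt)
  intro t
  rw [← NNReal.coe_le_coe, coe_nnnorm, (ff_hasDeriv t).deriv]
  rw [norm_mul, ff_norm, one_mul]
  have h2 : ‖(2 * (Real.pi:ℂ) * Complex.I : ℂ)‖ = 2 * Real.pi := by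
    rw [norm_mul, Complex.norm_I, mul_one, norm_mul, Complex.norm_real]
    norm_num [Real.norm_eq_abs, abs_of_pos Real.pi_pos]
  rw [h2]
  have : (((7:ℝ≥0)):ℝ) = 7 := by norm_num
  rw [this]
  nlinarith [Real.pi_lt_d2]

lemma ff_dist (a b : ℝ) : ‖ff a - ff b‖ ≤ 7 * |a - b| := by
  have := ff_lip.dist_le_mul a b
  rw [dist_eq_norm] at this
  simpa [Real.dist_eq] using this

/-- increments of the digit expansion of the circle -/
def dd : ℕ → ℝ → ℂ
  | 0, θ => ff (aa 0 θ)
  | (k+1), θ => ff (aa (k+1) θ) - ff (aa k θ)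

/-- masked (and for `p = 0`, negated) increments -/
def ddm (p k : ℕ) (θ : ℝ) : ℂ :=
  if k % 2 = p then (if p = 0 then -dd k θ else dd k θ) else 0

lemma sum_dd (K : ℕ) (θ : ℝ) :
    ∑ k ∈ Finset.range (K + 1), dd k θ = ff (aa K θ) := by
  induction K with
  | zero => simp [dd]
  | succ K ih => rw [Finset.sum_range_succ, ih, dd]; ring

lemma dd_aa {k K : ℕ} (h : k ≤ K) (θ : ℝ) : dd k (aa K θ) = dd k θ := by
  cases k with
  | zero => rw [dd, dd, aa_aa_of_le (Nat.zero_le K)]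
  | succ k =>
      rw [dd, dd, aa_aa_of_le h, aa_aa_of_le (le_trans (Nat.le_succ k) h)]

lemma dd_aa_zero {k K : ℕ} (h : K < k) (θ : ℝ) : dd k (aa K θ) = 0 := by
  obtain ⟨k, rfl⟩ := Nat.exists_eq_add_of_lt h
  rw [show K + k + 1 = (K + k) + 1 by ring, dd]
  rw [aa_aa_of_ge (by omega), aa_aa_of_ge (by omega), sub_self]

lemma ddm_eq_or (p k : ℕ) (θ : ℝ) :
    ddm p k θ = dd k θ ∨ ddm p k θ = -dd k θ ∨ ddm p k θ = 0 := by
  rw [ddm]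
  split_ifs with h1 h2
  · right; left; rfl
  · left; rfl
  · right; right; rfl

lemma ddm_norm_le (p k : ℕ) (θ : ℝ) : ‖ddm p k θ‖ ≤ ‖dd k θ‖ := by
  rcases ddm_eq_or p k θ with h | h | h <;> rw [h] <;> simp

lemma dd_bound {θ : ℝ} (hθ : 0 ≤ θ) (k : ℕ) : ‖dd k θ‖ ≤ 28 * (2⁻¹ : ℝ) ^ k := by
  cases k with
  | zero => rw [dd, ff_norm]; norm_num
  | succ k =>
      rw [dd]
      have h1 : ‖ff (aa (k+1) θ) - ff (aa k θ)‖ ≤ 7 * |aa (k+1) θ - aa k θ| :=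
        ff_dist _ _
      have h2 : |aa (k+1) θ - aa k θ| ≤ 1 / NN (k+1) + 1 / NN k := by
        have e1 := abs_sub_aa hθ (k+1)
        have e2 := abs_sub_aa hθ k
        calc |aa (k+1) θ - aa k θ| = |(aa (k+1) θ - θ) + (θ - aa k θ)| := by ring_nf
          _ ≤ |aa (k+1) θ - θ| + |θ - aa k θ| := abs_add_le _ _
          _ ≤ 1 / NN (k+1) + 1 / NN k := by
              rw [abs_sub_comm] at e1; exact add_le_add e1 e2
      have h3 : (1:ℝ) / NN (k+1) + 1 / NN k ≤ 2 / NN k := by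
        have : (NN k : ℝ) ≤ NN (k+1) := by
          exact_mod_cast Nat.le_of_dvd (NN_pos _) (NN_dvd (Nat.le_succ k))
        have hk := NN_posR k
        have hk1 := NN_posR (k+1)
        rw [div_add_div _ _ (ne_of_gt hk1) (ne_of_gt hk), div_le_div_iff₀ (by positivity) hk]
        nlinarith
      have h4 : (2:ℝ) / NN k ≤ 2 * (2⁻¹:ℝ)^k := by
        have : ((2:ℕ)^k : ℝ) ≤ (NN k : ℝ) := by exact_mod_cast NN_ge k
        have h2k : (0:ℝ) < (2:ℝ)^k := by positivity
        rw [div_le_iff₀ (NN_posR k)]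
        have e : (2:ℝ) * (2⁻¹:ℝ)^k * (2:ℝ)^k = 2 := by
          rw [mul_assoc, ← mul_pow]; norm_num
        calc (2:ℝ) = 2 * (2⁻¹:ℝ)^k * (2:ℝ)^k := e.symm
          _ ≤ 2 * (2⁻¹:ℝ)^k * NN k := by
              apply mul_le_mul_of_nonneg_left _ (by positivity)
              exact_mod_cast NN_ge k
      calc ‖ff (aa (k+1) θ) - ff (aa k θ)‖ ≤ 7 * (2 / NN k) := by
            apply h1.trans; apply mul_le_mul_of_nonneg_left (h2.trans h3) (by norm_num)
        _ ≤ 7 * (2 * (2⁻¹:ℝ)^k) := by nlinarith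
        _ = 28 * (2⁻¹:ℝ)^(k+1) := by rw [pow_succ]; ring

lemma dd_bound' {K k : ℕ} (hK : 1 ≤ K) (hk : K + 1 ≤ k) {θ : ℝ} (hθ : 0 ≤ θ) :
    ‖dd k θ‖ ≤ 28 / NN K * (2⁻¹ : ℝ) ^ (k - K) := by
  obtain ⟨j, rfl⟩ := Nat.exists_eq_add_of_le hk
  have hKk : K ≤ K + j := by omega
  rw [show K + 1 + j = (K + j) + 1 by ring, dd]
  have h1 := ff_dist (aa (K + j + 1) θ) (aa (K + j) θ)
  have h2 : |aa (K+j+1) θ - aa (K+j) θ| ≤ 2 / NN (K+j) := by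
    have e1 := abs_sub_aa hθ (K+j+1)
    have e2 := abs_sub_aa hθ (K+j)
    have hle : (NN (K+j) : ℝ) ≤ NN (K+j+1) := by
      exact_mod_cast Nat.le_of_dvd (NN_pos _) (NN_dvd (Nat.le_succ _))
    have hk := NN_posR (K+j)
    have hk1 := NN_posR (K+j+1)
    have : |aa (K+j+1) θ - aa (K+j) θ| ≤ 1 / NN (K+j+1) + 1 / NN (K+j) := by
      calc |aa (K+j+1) θ - aa (K+j) θ| = |(aa (K+j+1) θ - θ) + (θ - aa (K+j) θ)| := by ring_nf
        _ ≤ |aa (K+j+1) θ - θ| + |θ - aa (K+j) θ| := abs_add_le _ _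
        _ ≤ _ := by rw [abs_sub_comm]; exact add_le_add e1 e2
    apply this.trans
    rw [div_add_div _ _ (ne_of_gt hk1) (ne_of_gt hk), div_le_div_iff₀ (by positivity) hk]
    nlinarith
  have h3 : (NN K : ℝ) * 2^j ≤ NN (K + j) := by
    have := NN_mul_le hK hKk
    rw [Nat.add_sub_cancel_left] at this
    exact_mod_cast this
  have hNK := NN_posR K
  have hNKj := NN_posR (K+j)
  have h2j : (0:ℝ) < (2:ℝ)^j := by positivity
  have h4 : (2:ℝ) / NN (K+j) ≤ 2 / (NN K * 2^j) := by
    apply div_le_div_of_nonneg_left (by norm_num) (by positivity) h3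
  calc ‖ff (aa (K+j+1) θ) - ff (aa (K+j) θ)‖ ≤ 7 * (2 / NN (K+j)) := by
        apply h1.trans; exact mul_le_mul_of_nonneg_left h2 (by norm_num)
    _ ≤ 7 * (2 / (NN K * 2^j)) := by nlinarith
    _ = 14 / NN K * (2⁻¹:ℝ)^j := by
        rw [inv_pow]
        field_simp
        ring
    _ ≤ 28 / NN K * (2⁻¹:ℝ)^(K + j + 1 - K) := by
        rw [show K + j + 1 - K = j + 1 by omega, pow_succ]
        have : (0:ℝ) ≤ (2⁻¹:ℝ)^j := by positivity
        rw [div_mul_eq_mul_div, div_mul_eq_mul_div, div_le_div_iff₀ hNK hNK]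
        nlinarith

lemma summable_cc : Summable (fun k : ℕ => 28 * (2⁻¹:ℝ)^k) :=
  (summable_geometric_of_lt_one (by norm_num) (by norm_num)).mul_left 28

lemma summable_dd {θ : ℝ} (hθ : 0 ≤ θ) : Summable (fun k => dd k θ) :=
  Summable.of_norm_bounded summable_cc (fun k => dd_bound hθ k)

lemma summable_ddm (p : ℕ) {θ : ℝ} (hθ : 0 ≤ θ) : Summable (fun k => ddm p k θ) :=
  Summable.of_norm_bounded summable_cc
    (fun k => (ddm_norm_le p k θ).trans (dd_bound hθ k))


/-- the two halves of the dipole set -/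
def AA (p : ℕ) : Set ℂ :=
  { x | ∃ K θ, 1 ≤ K ∧ θ ∈ Ico (0:ℝ) 1 ∧ x = ∑ k ∈ Finset.range K, ddm p k θ }

lemma ddm_aa {p k K : ℕ} (h : k ≤ K) (θ : ℝ) : ddm p k (aa K θ) = ddm p k θ := by
  rw [ddm, ddm, dd_aa h]

lemma ddm_aa_zero {p k K : ℕ} (h : K < k) (θ : ℝ) : ddm p k (aa K θ) = 0 := by
  rw [ddm, dd_aa_zero h]
  split_ifs <;> simp

lemma level_raise (p : ℕ) {K' K'' : ℕ} (h1 : 1 ≤ K') (h2 : K' ≤ K'') {θ : ℝ}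
    (hθ : θ ∈ Ico (0:ℝ) 1) :
    ∃ θ' ∈ Ico (0:ℝ) 1, ∑ k ∈ Finset.range K'', ddm p k θ' = ∑ k ∈ Finset.range K', ddm p k θ := by
  refine ⟨aa (K' - 1) θ, aa_mem hθ _, ?_⟩
  have e1 : ∑ k ∈ Finset.range K'', ddm p k (aa (K' - 1) θ)
      = ∑ k ∈ Finset.range K', ddm p k (aa (K' - 1) θ) := by
    symm
    apply Finset.sum_subset (Finset.range_subset_range.2 h2)
    intro k hk hnk
    simp only [Finset.mem_range] at hk hnk
    exact ddm_aa_zero (by omega) θ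
  rw [e1]
  apply Finset.sum_congr rfl
  intro k hk
  simp only [Finset.mem_range] at hk
  exact ddm_aa (by omega) θ

lemma geom_partial_le (m : ℕ) : ∑ j ∈ Finset.range m, (2⁻¹:ℝ)^j ≤ 2 := by
  have h := Summable.sum_le_tsum (Finset.range m) (fun i _ => by positivity)
    (summable_geometric_of_lt_one (by norm_num : (0:ℝ) ≤ 2⁻¹) (by norm_num))
  apply h.trans
  rw [tsum_geometric_of_lt_one (by norm_num) (by norm_num)]
  norm_num

lemma AA_bounded {p : ℕ} : AA p ⊆ Metric.closedBall (0:ℂ) 56 := by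
  rintro x ⟨K, θ, hK, hθ, rfl⟩
  rw [Metric.mem_closedBall, dist_zero_right]
  calc ‖∑ k ∈ Finset.range K, ddm p k θ‖ ≤ ∑ k ∈ Finset.range K, ‖ddm p k θ‖ :=
        norm_sum_le _ _
    _ ≤ ∑ k ∈ Finset.range K, 28 * (2⁻¹:ℝ)^k :=
        Finset.sum_le_sum (fun k _ => (ddm_norm_le p k θ).trans (dd_bound hθ.1 k))
    _ = 28 * ∑ k ∈ Finset.range K, (2⁻¹:ℝ)^k := by rw [Finset.mul_sum]
    _ ≤ 28 * 2 := by nlinarith [geom_partial_le K]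
    _ = 56 := by norm_num

lemma isCompact_closure_AA (p : ℕ) : IsCompact (closure (AA p)) :=
  isCompact_of_isClosed_isBounded isClosed_closure
    ((Metric.isBounded_closedBall.subset AA_bounded).closure)

lemma continuous_ff : Continuous ff := by
  apply Complex.continuous_exp.comp
  fun_prop

lemma tendsto_aa (θ : ℝ) (hθ : 0 ≤ θ) : Tendsto (fun K => aa K θ) atTop (𝓝 θ) := by
  rw [tendsto_iff_dist_tendsto_zero]
  apply squeeze_zero (fun K => dist_nonneg) (g := fun K => (2⁻¹:ℝ)^K)
  · intro K
    rw [Real.dist_eq, abs_sub_comm]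
    refine (abs_sub_aa hθ K).trans ?_
    have h1 : ((2:ℝ))^K ≤ (NN K : ℝ) := by exact_mod_cast NN_ge K
    have h2 : (0:ℝ) < 2^K := by positivity
    rw [inv_pow, one_div]
    exact inv_anti₀ h2 h1
  · exact tendsto_pow_atTop_nhds_zero_of_lt_one (by norm_num) (by norm_num)

lemma tsum_dd_eq {θ : ℝ} (hθ : θ ∈ Ico (0:ℝ) 1) : ∑' k, dd k θ = ff θ := by
  have hs := summable_dd hθ.1
  have h1 : Tendsto (fun K => ∑ k ∈ Finset.range (K + 1), dd k θ) atTop (𝓝 (∑' k, dd k θ)) :=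
    (hs.hasSum.tendsto_sum_nat).comp (tendsto_add_atTop_nat 1)
  have h2 : Tendsto (fun K => ff (aa K θ)) atTop (𝓝 (ff θ)) :=
    (continuous_ff.tendsto θ).comp (tendsto_aa θ hθ.1)
  simp only [sum_dd] at h1
  exact tendsto_nhds_unique h1 h2

lemma tsum_ddm_mem (p : ℕ) {θ : ℝ} (hθ : θ ∈ Ico (0:ℝ) 1) :
    ∑' k, ddm p k θ ∈ closure (AA p) := by
  have hs := summable_ddm p hθ.1
  apply mem_closure_of_tendsto hs.hasSum.tendsto_sum_nat
  rw [eventually_atTop]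
  exact ⟨1, fun n hn => ⟨n, θ, hn, hθ, rfl⟩⟩

lemma key_sub {θ : ℝ} (hθ : θ ∈ Ico (0:ℝ) 1) :
    ∃ y ∈ closure (AA 1), ∃ x ∈ closure (AA 0), ff θ = y - x := by
  refine ⟨∑' k, ddm 1 k θ, tsum_ddm_mem 1 hθ, ∑' k, ddm 0 k θ, tsum_ddm_mem 0 hθ, ?_⟩
  have hs1 := summable_ddm 1 hθ.1
  have hs0 := summable_ddm 0 hθ.1
  rw [← Summable.tsum_sub hs1 hs0]
  rw [← tsum_dd_eq hθ]
  apply tsum_congr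
  intro k
  rcases Nat.mod_two_eq_zero_or_one k with h | h
  · simp only [ddm, h]
    norm_num
  · simp only [ddm, h]
    norm_num

lemma exists_theta {z : ℂ} (hz : ‖z‖ = 1) : ∃ θ ∈ Ico (0:ℝ) 1, ff θ = z := by
  have hπ := Real.pi_pos
  have habs : ‖z‖ = 1 := hz
  have hexp : Complex.exp ((z.arg : ℂ) * Complex.I) = z := by
    have h := Complex.norm_mul_exp_arg_mul_I z
    rwa [habs, Complex.ofReal_one, one_mul] at h
  have harg_le := Complex.arg_le_pi z
  have harg_gt := Complex.neg_pi_lt_arg z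
  have hπC : (Real.pi : ℂ) ≠ 0 := Complex.ofReal_ne_zero.2 (ne_of_gt hπ)
  rcases le_or_gt 0 z.arg with h0 | h0
  · refine ⟨z.arg / (2 * Real.pi), ⟨by positivity, ?_⟩, ?_⟩
    · rw [div_lt_one (by positivity)]
      linarith
    · rw [ff]
      rw [show ((z.arg / (2 * Real.pi) : ℝ) : ℂ) * (2 * (Real.pi:ℝ) * Complex.I)
          = (z.arg : ℂ) * Complex.I by push_cast; field_simp]
      exact hexp
  · refine ⟨z.arg / (2 * Real.pi) + 1, ⟨?_, ?_⟩, ?_⟩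
    · have h1 : -1 ≤ z.arg / (2 * Real.pi) := by
        rw [le_div_iff₀ (by positivity : (0:ℝ) < 2 * Real.pi)]
        nlinarith
      linarith
    · have : z.arg / (2 * Real.pi) < 0 := div_neg_of_neg_of_pos h0 (by positivity)
      linarith
    · rw [ff]
      rw [show ((z.arg / (2 * Real.pi) + 1 : ℝ) : ℂ) * (2 * (Real.pi:ℝ) * Complex.I)
          = (z.arg : ℂ) * Complex.I + 2 * (Real.pi:ℝ) * Complex.I by
            push_cast; field_simp]
      rw [Complex.exp_add, hexp, Complex.exp_two_pi_mul_I, mul_one]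

lemma cover (p K : ℕ) (hK : 1 ≤ K) (hpar : K % 2 ≠ p) :
    ∃ c : Fin (NN (K - 1)) → ℂ,
      AA p ⊆ ⋃ i, Metric.closedBall (c i) (56 / NN K) := by
  refine ⟨fun i => ∑ k ∈ Finset.range K, ddm p k (((i : ℕ) : ℝ) / (NN (K - 1))), ?_⟩
  rintro x ⟨K', θ, hK', hθ, rfl⟩
  obtain ⟨θ', hθ', hsum⟩ := level_raise p hK' (le_max_right K K') hθ
  set K'' := max K K' with hK''
  have hKK'' : K ≤ K'' := le_max_left _ _
  set m := ⌊(NN (K - 1) : ℝ) * θ'⌋₊ with hm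
  have hmlt : m < NN (K - 1) := by
    rw [hm, Nat.floor_lt (mul_nonneg (NN_posR (K-1)).le hθ'.1)]
    nlinarith [hθ'.2, NN_posR (K - 1), hθ'.1]
  have hctr : ((m : ℝ) / (NN (K - 1)) : ℝ) = aa (K - 1) θ' := by rw [aa, hm]
  rw [Set.mem_iUnion]
  refine ⟨⟨m, hmlt⟩, ?_⟩
  rw [Metric.mem_closedBall, dist_eq_norm]
  beta_reduce
  have hc : ∑ k ∈ Finset.range K, ddm p k (((m : ℕ) : ℝ) / (NN (K - 1)))
      = ∑ k ∈ Finset.range K, ddm p k θ' := by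
    rw [hctr]
    apply Finset.sum_congr rfl
    intro k hk
    simp only [Finset.mem_range] at hk
    exact ddm_aa (by omega) θ'
  rw [hc, ← hsum, ← Finset.sum_Ico_eq_sub _ hKK'']
  have hterm : ∀ k ∈ Finset.Ico K K'', ‖ddm p k θ'‖ ≤ 28 / NN K * (2⁻¹:ℝ)^(k - K) := by
    intro k hk
    simp only [Finset.mem_Ico] at hk
    by_cases hkp : k % 2 = p
    · have hk1 : K + 1 ≤ k := by omega
      exact (ddm_norm_le p k θ').trans (dd_bound' hK hk1 hθ'.1)
    · rw [ddm, if_neg hkp, norm_zero]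
      positivity
  calc ‖∑ k ∈ Finset.Ico K K'', ddm p k θ'‖
      ≤ ∑ k ∈ Finset.Ico K K'', ‖ddm p k θ'‖ := norm_sum_le _ _
    _ ≤ ∑ k ∈ Finset.Ico K K'', 28 / NN K * (2⁻¹:ℝ)^(k - K) := Finset.sum_le_sum hterm
    _ = 28 / NN K * ∑ j ∈ Finset.range (K'' - K), (2⁻¹:ℝ)^j := by
        rw [Finset.sum_Ico_eq_sum_range, Finset.mul_sum]
        apply Finset.sum_congr rfl
        intro j hj
        rw [Nat.add_sub_cancel_left]
    _ ≤ 28 / NN K * 2 := by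
        have := geom_partial_le (K'' - K)
        have hNK := NN_posR K
        apply mul_le_mul_of_nonneg_left this (by positivity)
    _ = 56 / NN K := by ring

lemma real_decay {d : ℝ} (hd : 0 < d) (p : ℕ) :
    Tendsto (fun n : ℕ => (NN (2*n + p) : ℝ) * (112 / NN (2*n + 1 + p)) ^ d)
      atTop (𝓝 0) := by
  obtain ⟨n₀, hn₀⟩ := exists_nat_ge (2 / d)
  have h112 : (0:ℝ) < (112:ℝ) ^ d := Real.rpow_pos_of_pos (by norm_num) d
  apply squeeze_zero' (g := fun n => (112:ℝ)^d * (2⁻¹:ℝ)^n)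
  · filter_upwards with n
    have := NN_posR (2*n + p)
    have h2 := NN_posR (2*n + 1 + p)
    positivity
  · rw [eventually_atTop]
    refine ⟨n₀, fun n hn => ?_⟩
    set F := (2*n + p).factorial with hF
    set G := (2*n + 1 + p).factorial with hG
    have hFpos := (2*n + p).factorial_pos
    have hGF : G = (2*n + 1 + p) * F := by
      rw [hG, hF, show 2*n + 1 + p = (2*n + p) + 1 by ring]
      rfl
    have hFn : n ≤ F := le_trans (by omega) (Nat.self_le_factorial _)
    have hFR : (0:ℝ) ≤ (F:ℝ) := by positivity
    have hGR : (G:ℝ) = (2*(n:ℝ) + 1 + (p:ℝ)) * (F:ℝ) := by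
      rw [hGF]; push_cast; ring
    have hexp : (F : ℝ) + n ≤ (G:ℝ) * d := by
      have h1 : (2:ℝ) ≤ d * (2*(n:ℝ) + 1 + (p:ℝ)) := by
        have hc2 : (n₀:ℝ) ≤ 2*(n:ℝ) + 1 + (p:ℝ) := by
          have hnn : (n₀:ℝ) ≤ (n:ℝ) := Nat.cast_le.2 hn
          have hp0 : (0:ℝ) ≤ (p:ℝ) := Nat.cast_nonneg p
          have hn0 : (0:ℝ) ≤ (n:ℝ) := Nat.cast_nonneg n
          linarith
        rw [div_le_iff₀ hd] at hn₀
        nlinarith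
      have h2 : (F:ℝ) + n ≤ 2 * F := by
        have : (n:ℝ) ≤ F := by exact_mod_cast hFn
        linarith
      have h3 : 2 * (F:ℝ) ≤ d * (2*(n:ℝ) + 1 + (p:ℝ)) * F :=
        by nlinarith [mul_le_mul_of_nonneg_right h1 hFR]
      rw [hGR]
      nlinarith
    have hclaim : (2:ℝ)^F * (2:ℝ)^n ≤ ((2:ℝ)^G)^d := by
      rw [← Real.rpow_natCast 2 F, ← Real.rpow_natCast 2 G, ← Real.rpow_natCast 2 n,
        ← Real.rpow_add two_pos, ← Real.rpow_mul (by norm_num : (0:ℝ) ≤ 2)]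
      rw [Real.rpow_le_rpow_left_iff one_lt_two]
      exact hexp
    have hNN1 : (NN (2*n + p) : ℝ) = (2:ℝ)^F := by rw [NN, ← hF]; push_cast; ring
    have hNN2 : (NN (2*n + 1 + p) : ℝ) = (2:ℝ)^G := by rw [NN, ← hG]; push_cast; ring
    rw [hNN1, hNN2]
    have h2G : (0:ℝ) < (2:ℝ)^G := by positivity
    have h2Gd : (0:ℝ) < ((2:ℝ)^G)^d := Real.rpow_pos_of_pos h2G d
    have h2F : (0:ℝ) < (2:ℝ)^F := by positivity
    have h2n : (0:ℝ) < (2:ℝ)^n := by positivity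
    rw [Real.div_rpow (by norm_num) h2G.le]
    have hinv : (2⁻¹:ℝ)^n * (2:ℝ)^n = 1 := by
      rw [← mul_pow]; norm_num
    calc (2:ℝ)^F * ((112:ℝ)^d / ((2:ℝ)^G)^d) = (2:ℝ)^F * (112:ℝ)^d / ((2:ℝ)^G)^d := by ring
      _ ≤ (112:ℝ)^d * (2⁻¹:ℝ)^n := by
          rw [div_le_iff₀ h2Gd]
          calc (2:ℝ)^F * (112:ℝ)^d = (112:ℝ)^d * (2⁻¹:ℝ)^n * ((2:ℝ)^F * (2:ℝ)^n) := by
                rw [show (112:ℝ)^d * (2⁻¹:ℝ)^n * ((2:ℝ)^F * (2:ℝ)^n)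
                    = (112:ℝ)^d * ((2⁻¹:ℝ)^n * (2:ℝ)^n) * (2:ℝ)^F by ring, hinv]
                ring
            _ ≤ (112:ℝ)^d * (2⁻¹:ℝ)^n * ((2:ℝ)^G)^d := by
                apply mul_le_mul_of_nonneg_left hclaim (by positivity)
  · have h := tendsto_pow_atTop_nhds_zero_of_lt_one
      (by norm_num : (0:ℝ) ≤ 2⁻¹) (by norm_num : (2⁻¹:ℝ) < 1)
    simpa using h.const_mul ((112:ℝ)^d)

lemma dimH_closure_AA {p : ℕ} (hp : p ≤ 1) : dimH (closure (AA p)) = 0 := by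
  apply le_antisymm _ zero_le
  apply dimH_le
  intro d' hd'
  rcases eq_or_ne d' 0 with rfl | hne
  · simp
  exfalso
  have hd : (0:ℝ) < (d' : ℝ) := by
    exact_mod_cast lt_of_le_of_ne (show 0 ≤ d' from zero_le) (Ne.symm hne)
  have hKn : ∀ n : ℕ, 1 ≤ 2*n + 1 + p ∧ (2*n + 1 + p) % 2 ≠ p := by
    intro n; omega
  choose c hc using fun n => cover p (2*n + 1 + p) (hKn n).1 (hKn n).2
  set εr : ℕ → ℝ := fun n => 56 / NN (2*n + 1 + p) with hεrdef
  have hεr : ∀ n, 0 < εr n := fun n => by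
    have := NN_posR (2*n + 1 + p); positivity
  set r : ℕ → ℝ≥0∞ := fun n => 2 * ENNReal.ofReal (εr n) with hrdef
  set t : ∀ n : ℕ, Fin (NN (2*n + 1 + p - 1)) → Set ℂ :=
    fun n i => Metric.closedBall (c n i) (εr n) with htdef
  have hdiam : ∀ n i, EMetric.diam (t n i) ≤ r n := by
    intro n i
    rw [htdef]
    beta_reduce
    rw [← Metric.emetric_closedBall (hεr n).le]
    exact EMetric.diam_closedBall
  have hr0 : Tendsto r atTop (𝓝 0) := by
    have h1 : Tendsto εr atTop (𝓝 0) := by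
      apply squeeze_zero (fun n => (hεr n).le) (g := fun n => 56 * (2⁻¹:ℝ)^n)
      · intro n
        have h2 : ((2:ℕ))^n ≤ NN (2*n + 1 + p) := by
          refine le_trans (Nat.pow_le_pow_right (by norm_num) (by omega)) (NN_ge _)
        have h2R : (2:ℝ)^n ≤ (NN (2*n + 1 + p) : ℝ) := by exact_mod_cast h2
        have h2n : (0:ℝ) < (2:ℝ)^n := by positivity
        rw [hεrdef]
        simp only
        rw [div_le_iff₀ (NN_posR _)]
        calc (56:ℝ) = 56 * (2⁻¹:ℝ)^n * (2:ℝ)^n := by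
              rw [mul_assoc, ← mul_pow]; norm_num
          _ ≤ 56 * (2⁻¹:ℝ)^n * NN (2*n + 1 + p) := by
              apply mul_le_mul_of_nonneg_left h2R (by positivity)
      · have h := tendsto_pow_atTop_nhds_zero_of_lt_one
          (by norm_num : (0:ℝ) ≤ 2⁻¹) (by norm_num : (2⁻¹:ℝ) < 1)
        simpa using h.const_mul (56:ℝ)
    have h2 : Tendsto (fun n => ENNReal.ofReal (εr n)) atTop (𝓝 0) := by
      have := ENNReal.tendsto_ofReal h1
      simpa using this
    have h3 := ENNReal.Tendsto.const_mul h2 (Or.inr (by norm_num : (2:ℝ≥0∞) ≠ ⊤))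
    simpa [hrdef] using h3
  have hcov : ∀ n, closure (AA p) ⊆ ⋃ i, t n i := fun n =>
    closure_minimal (hc n) (isClosed_iUnion_of_finite fun i => Metric.isClosed_closedBall)
  have hμ := MeasureTheory.Measure.hausdorffMeasure_le_liminf_sum (d' : ℝ) (closure (AA p)) r hr0 t
    (Eventually.of_forall hdiam) (Eventually.of_forall hcov)
  have hsum_le : ∀ n, ∑ i : Fin (NN (2*n + 1 + p - 1)), EMetric.diam (t n i) ^ (d' : ℝ)
      ≤ (NN (2*n + p) : ℝ≥0∞) * r n ^ (d' : ℝ) := by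
    intro n
    have hidx : 2*n + 1 + p - 1 = 2*n + p := by omega
    calc ∑ i : Fin (NN (2*n + 1 + p - 1)), EMetric.diam (t n i) ^ (d' : ℝ)
        ≤ ∑ _i : Fin (NN (2*n + 1 + p - 1)), r n ^ (d' : ℝ) :=
          Finset.sum_le_sum (fun i _ => ENNReal.rpow_le_rpow (hdiam n i) hd.le)
      _ = (NN (2*n + 1 + p - 1) : ℝ≥0∞) * r n ^ (d' : ℝ) := by
          rw [Finset.sum_const, Finset.card_univ, Fintype.card_fin, nsmul_eq_mul]
      _ = (NN (2*n + p) : ℝ≥0∞) * r n ^ (d' : ℝ) := by rw [hidx]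
  have hkey : ∀ n, (NN (2*n + p) : ℝ≥0∞) * r n ^ (d' : ℝ)
      = ENNReal.ofReal ((NN (2*n + p) : ℝ) * (112 / NN (2*n + 1 + p)) ^ (d' : ℝ)) := by
    intro n
    have hpos : (0:ℝ) < 112 / NN (2*n + 1 + p) := by
      have := NN_posR (2*n + 1 + p); positivity
    have hr_eq : r n = ENNReal.ofReal (112 / NN (2*n + 1 + p)) := by
      rw [hrdef]
      simp only
      rw [hεrdef]
      simp only
      rw [show (2:ℝ≥0∞) = ENNReal.ofReal (2:ℝ) by norm_num,
        ← ENNReal.ofReal_mul (by norm_num : (0:ℝ) ≤ 2)]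
      congr 1
      ring
    rw [hr_eq, ENNReal.ofReal_rpow_of_pos hpos,
      ← ENNReal.ofReal_natCast (NN (2*n + p)),
      ← ENNReal.ofReal_mul (Nat.cast_nonneg _)]
  have hlim0 : Tendsto (fun n => (NN (2*n + p) : ℝ≥0∞) * r n ^ (d' : ℝ)) atTop (𝓝 0) := by
    simp only [hkey]
    have := ENNReal.tendsto_ofReal (real_decay hd p)
    simpa using this
  have hzero : μH[(d' : ℝ)] (closure (AA p)) = 0 := by
    apply le_antisymm _ zero_le
    apply hμ.trans
    rw [← hlim0.liminf_eq]
    exact liminf_le_liminf (Eventually.of_forall hsum_le)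
  rw [hd'] at hzero
  exact ENNReal.top_ne_zero hzero

end KD

theorem exists_compact_dipole_dimH_zero :
    ∃ P : Set (EuclideanSpace ℝ (Fin 2)), IsCompact P ∧
      Metric.sphere (0 : EuclideanSpace ℝ (Fin 2)) 1 ⊆ P - P ∧
      dimH P = 0 := by
  set e := Complex.isometryOfOrthonormal (EuclideanSpace.basisFun (Fin 2) ℝ) with he
  set Pc : Set ℂ := closure (AA 1) ∪ closure (AA 0) with hPc
  refine ⟨e '' Pc, ?_, ?_, ?_⟩
  · exact ((isCompact_closure_AA 1).union (isCompact_closure_AA 0)).image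
      e.continuous
  · intro v hv
    have hz : ‖e.symm v‖ = 1 := by
      rw [e.symm.norm_map]
      rwa [Metric.mem_sphere, dist_zero_right] at hv
    obtain ⟨θ, hθ, hffθ⟩ := exists_theta hz
    obtain ⟨y, hy, x, hx, hsub⟩ := key_sub hθ
    have hv' : v = e y - e x := by
      have h1 : e.symm v = y - x := by rw [← hffθ, hsub]
      calc v = e (e.symm v) := (e.apply_symm_apply v).symm
        _ = e (y - x) := by rw [h1]
        _ = e y - e x := by rw [map_sub]
    rw [hv']
    exact Set.sub_mem_sub (Set.mem_image_of_mem e (Or.inl hy))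
      (Set.mem_image_of_mem e (Or.inr hx))
  · rw [e.isometry.dimH_image, hPc, dimH_union,
      dimH_closure_AA (le_refl 1), dimH_closure_AA (Nat.zero_le 1)]
    simp
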